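/- arXiv:2412.18138 — 3 statements merged into one kernel-verified Lean document; each statement's English description precedes it below -/
import Mathlib

section
/- Assume group 1 has strictly higher base rate than group 2 and randomized classifiers are allowed. Let U* = 1 - min(n_1/n_+, λ·n_2/n_-)·(BR_1 - BR_2). Then for any classifier h^0, there exists a randomized classifier h' with zero disparity and utility at least U(h^0) if and only if U(h^0) ≤ U*. -/
noncomputable def disp (n11 n10 n21 n20 : ℝ) (p : Fin 4 → ℝ) : ℝ :=
  (p 0 * n11 + p 1 * n10) / (n11 + n10) - (p 2 * n21 + p 3 * n20) / (n21 + n20)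

noncomputable def util (n11 n10 n21 n20 lam : ℝ) (p : Fin 4 → ℝ) : ℝ :=
  (p 0 * n11 + p 2 * n21) / (n11 + n21) - lam * ((p 1 * n10 + p 3 * n20) / (n10 + n20))

lemma util_ub (n11 n10 n21 n20 lam : ℝ)
    (h11 : 0 < n11) (h10 : 0 < n10) (h21 : 0 < n21) (h20 : 0 < n20) (hlam : 0 < lam)
    (p : Fin 4 → ℝ) (hp : p ∈ Set.Icc (0 : Fin 4 → ℝ) 1)
    (hd : disp n11 n10 n21 n20 p = 0) :
    util n11 n10 n21 n20 lam p ≤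
      1 - min ((n11 + n10) / (n11 + n21)) (lam * (n21 + n20) / (n10 + n20)) *
        (n11 / (n11 + n10) - n21 / (n21 + n20)) := by
  obtain ⟨hl, hu⟩ := hp
  have h0l := hl 0; have h1l := hl 1; have h2l := hl 2; have h3l := hl 3
  have h0u := hu 0; have h1u := hu 1; have h2u := hu 2; have h3u := hu 3
  simp only [Pi.zero_apply, Pi.one_apply] at h0l h1l h2l h3l h0u h1u h2u h3u
  have hn1 : (0:ℝ) < n11 + n10 := by linarith
  have hn2 : (0:ℝ) < n21 + n20 := by linarith
  have hnp : (0:ℝ) < n11 + n21 := by linarith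
  have hnm : (0:ℝ) < n10 + n20 := by linarith
  have hd' : (n21 + n20) * (p 0 * n11 + p 1 * n10) = (n11 + n10) * (p 2 * n21 + p 3 * n20) := by
    have := hd
    unfold disp at this
    field_simp at this
    linarith
  set m := min ((n11 + n10) / (n11 + n21)) (lam * (n21 + n20) / (n10 + n20)) with hm
  have hm1 : m ≤ (n11 + n10) / (n11 + n21) := min_le_left _ _
  have hm2 : m ≤ lam * (n21 + n20) / (n10 + n20) := min_le_right _ _
  have hm0 : 0 ≤ m := le_min (by positivity) (by positivity)
  -- key quantities
  have hX1 : (0:ℝ) ≤ (n11 - p 0 * n11) / (n11 + n10) := by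
    apply div_nonneg _ hn1.le; nlinarith
  have hX2 : (0:ℝ) ≤ p 3 * n20 / (n21 + n20) := by positivity
  have h1 : n11 / (n11 + n10) - n21 / (n21 + n20) ≤
      (n11 - p 0 * n11) / (n11 + n10) + p 3 * n20 / (n21 + n20) := by
    have hnum : (n21 + n20) * (p 0 * n11) ≤ (n11 + n10) * n21 + (n11 + n10) * (p 3 * n20) := by
      nlinarith [mul_nonneg hn1.le (mul_nonneg (sub_nonneg.mpr h2u) h21.le),
        mul_nonneg hn2.le (mul_nonneg h1l h10.le)]
    rw [div_sub_div _ _ hn1.ne' hn2.ne', div_add_div _ _ hn1.ne' hn2.ne',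
      div_le_div_iff₀ (by positivity) (by positivity)]
    nlinarith [mul_le_mul_of_nonneg_right hnum (mul_pos hn1 hn2).le]
  have key : m * (n11 / (n11 + n10) - n21 / (n21 + n20)) ≤ 1 - util n11 n10 n21 n20 lam p := by
    calc m * (n11 / (n11 + n10) - n21 / (n21 + n20))
        ≤ m * ((n11 - p 0 * n11) / (n11 + n10) + p 3 * n20 / (n21 + n20)) :=
          mul_le_mul_of_nonneg_left h1 hm0
      _ = m * ((n11 - p 0 * n11) / (n11 + n10)) + m * (p 3 * n20 / (n21 + n20)) := by ring
      _ ≤ ((n11 + n10) / (n11 + n21)) * ((n11 - p 0 * n11) / (n11 + n10))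
            + (lam * (n21 + n20) / (n10 + n20)) * (p 3 * n20 / (n21 + n20)) := by
          gcongr
      _ = (n11 - p 0 * n11) / (n11 + n21) + lam * (p 3 * n20) / (n10 + n20) := by
          field_simp
      _ ≤ 1 - util n11 n10 n21 n20 lam p := by
          have heq : 1 - util n11 n10 n21 n20 lam p
              - ((n11 - p 0 * n11) / (n11 + n21) + lam * (p 3 * n20) / (n10 + n20))
              = (n21 - p 2 * n21) / (n11 + n21) + lam * (p 1 * n10) / (n10 + n20) := by
            unfold util; field_simp; ring
          have hpos1 : (0:ℝ) ≤ (n21 - p 2 * n21) / (n11 + n21) := by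
            apply div_nonneg _ hnp.le; nlinarith
          have hpos2 : (0:ℝ) ≤ lam * (p 1 * n10) / (n10 + n20) := by positivity
          linarith
  linarith

/-- Theorem 1 of the paper: with `BR₁ > BR₂` and randomized classifiers
allowed, for any classifier `p₀` there exists a randomized classifier with zero
disparity and utility at least `U(p₀)` if and only if
`U(p₀) ≤ U* = 1 - min(n₁/n₊, λ·n₂/n₋)·(BR₁ - BR₂)`. -/
theorem zero_disparity_alternative_iff_utility_le_threshold
    (n11 n10 n21 n20 lam : ℝ)
    (h11 : 0 < n11) (h10 : 0 < n10) (h21 : 0 < n21) (h20 : 0 < n20) (hlam : 0 < lam)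
    (hBR : n21 / (n21 + n20) < n11 / (n11 + n10))
    (p0 : Fin 4 → ℝ) (hp0 : p0 ∈ Set.Icc (0 : Fin 4 → ℝ) 1) :
    (∃ p ∈ Set.Icc (0 : Fin 4 → ℝ) 1,
        disp n11 n10 n21 n20 p = 0 ∧
        util n11 n10 n21 n20 lam p0 ≤ util n11 n10 n21 n20 lam p)
      ↔ util n11 n10 n21 n20 lam p0 ≤
          1 - min ((n11 + n10) / (n11 + n21)) (lam * (n21 + n20) / (n10 + n20)) *
            (n11 / (n11 + n10) - n21 / (n21 + n20)) := by
  have hn1 : (0:ℝ) < n11 + n10 := by linarith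
  have hn2 : (0:ℝ) < n21 + n20 := by linarith
  have hnp : (0:ℝ) < n11 + n21 := by linarith
  have hnm : (0:ℝ) < n10 + n20 := by linarith
  have hBR' : n21 * (n11 + n10) < n11 * (n21 + n20) := by
    rw [div_lt_div_iff₀ hn2 hn1] at hBR; linarith
  constructor
  · rintro ⟨p, hp, hd, hle⟩
    exact hle.trans (util_ub n11 n10 n21 n20 lam h11 h10 h21 h20 hlam p hp hd)
  · intro h
    rcases le_total ((n11 + n10) / (n11 + n21)) (lam * (n21 + n20) / (n10 + n20)) with hc | hc
    · -- min is n1/n+ ; use p = (t, 0, 1, 0), t = BR2/BR1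
      set t : ℝ := n21 * (n11 + n10) / ((n21 + n20) * n11) with ht
      have ht0 : 0 ≤ t := by positivity
      have ht1 : t ≤ 1 := by
        rw [ht, div_le_one (by positivity)]; nlinarith
      have ht' : t * n11 = n21 * (n11 + n10) / (n21 + n20) := by
        rw [ht]; field_simp
      refine ⟨![t, 0, 1, 0], ?_, ?_, ?_⟩
      · rw [Set.mem_Icc]
        constructor <;> intro i <;> fin_cases i <;>
          simp [Pi.le_def, ht0, ht1]
      · unfold disp
        simp only [Matrix.cons_val_zero, Matrix.cons_val_one, Matrix.head_cons,
          Matrix.cons_val_two, Matrix.tail_cons, Matrix.cons_val_three,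
          zero_mul, add_zero, one_mul]
        rw [ht']
        field_simp
        ring
      · rw [min_eq_left hc] at h
        refine h.trans (le_of_eq ?_)
        unfold util
        simp only [Matrix.cons_val_zero, Matrix.cons_val_one, Matrix.head_cons,
          Matrix.cons_val_two, Matrix.tail_cons, Matrix.cons_val_three,
          zero_mul, add_zero, one_mul]
        rw [ht']
        field_simp
        ring
    · -- min is lam*n2/n- ; use p = (1, 0, 1, t), t = n2(BR1-BR2)/n20
      set t : ℝ := ((n21 + n20) * n11 / (n11 + n10) - n21) / n20 with ht
      have ht0 : 0 ≤ t := by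
        apply div_nonneg _ h20.le
        rw [sub_nonneg, le_div_iff₀ hn1]; nlinarith
      have ht1 : t ≤ 1 := by
        rw [ht, div_le_one h20, sub_le_iff_le_add, div_le_iff₀ hn1]; nlinarith
      refine ⟨![1, 0, 1, t], ?_, ?_, ?_⟩
      · rw [Set.mem_Icc]
        constructor <;> intro i <;> fin_cases i <;>
          simp [Pi.le_def, ht0, ht1]
      · unfold disp
        simp only [Matrix.cons_val_zero, Matrix.cons_val_one, Matrix.head_cons,
          Matrix.cons_val_two, Matrix.tail_cons, Matrix.cons_val_three]
        rw [ht]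
        field_simp
        ring
      · rw [min_eq_right hc] at h
        refine h.trans (le_of_eq ?_)
        unfold util
        simp only [Matrix.cons_val_zero, Matrix.cons_val_one, Matrix.head_cons,
          Matrix.cons_val_two, Matrix.tail_cons, Matrix.cons_val_three]
        rw [ht]
        field_simp
        ring
end

section
/- In the randomized classifier model with BR_1 > BR_2, any classifier achieving zero disparity must have utility at most 1 - min(n_1/n_+, λ·n_2/n_-)·(BR_1 - BR_2); that is, the utility-optimal zero-disparity classifier attains exactly this bound. -/
/-- with `BR₁ > BR₂`, every zero-disparity randomized classifier has
utility at most `1 - min(n₁/n₊, λ·n₂/n₋)·(BR₁ - BR₂)`, and this bound is attained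
by some zero-disparity classifier. -/
theorem zero_disparity_utility_bound_attained
    (n11 n10 n21 n20 lam : ℝ)
    (h11 : 0 < n11) (h10 : 0 < n10) (h21 : 0 < n21) (h20 : 0 < n20) (hlam : 0 < lam)
    (hBR : n21 / (n21 + n20) < n11 / (n11 + n10)) :
    (∀ p ∈ Set.Icc (0 : Fin 4 → ℝ) 1, disp n11 n10 n21 n20 p = 0 →
        util n11 n10 n21 n20 lam p ≤
          1 - min ((n11 + n10) / (n11 + n21)) (lam * (n21 + n20) / (n10 + n20)) *
            (n11 / (n11 + n10) - n21 / (n21 + n20))) ∧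
    (∃ p ∈ Set.Icc (0 : Fin 4 → ℝ) 1, disp n11 n10 n21 n20 p = 0 ∧
        util n11 n10 n21 n20 lam p =
          1 - min ((n11 + n10) / (n11 + n21)) (lam * (n21 + n20) / (n10 + n20)) *
            (n11 / (n11 + n10) - n21 / (n21 + n20))) := by
  have hab : (0:ℝ) < n11 + n10 := by linarith
  have hcd : (0:ℝ) < n21 + n20 := by linarith
  have hac : (0:ℝ) < n11 + n21 := by linarith
  have hbd : (0:ℝ) < n10 + n20 := by linarith
  set δ : ℝ := n11 / (n11 + n10) - n21 / (n21 + n20) with hδdef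
  have hδ : 0 < δ := sub_pos.mpr hBR
  set A : ℝ := (n11 + n10) / (n11 + n21) with hAdef
  set B : ℝ := lam * (n21 + n20) / (n10 + n20) with hBdef
  have hA : 0 < A := div_pos hab hac
  have hB : 0 < B := div_pos (mul_pos hlam hcd) hbd
  have hmA : min A B ≤ A := min_le_left _ _
  have hmB : min A B ≤ B := min_le_right _ _
  have hm0 : 0 < min A B := lt_min hA hB
  constructor
  · rintro p ⟨hpl, hpu⟩ hdisp
    have h0l : 0 ≤ p 0 := hpl 0
    have h1l : 0 ≤ p 1 := hpl 1
    have h2l : 0 ≤ p 2 := hpl 2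
    have h3l : 0 ≤ p 3 := hpl 3
    have h0u : p 0 ≤ 1 := hpu 0
    have h1u : p 1 ≤ 1 := hpu 1
    have h2u : p 2 ≤ 1 := hpu 2
    have h3u : p 3 ≤ 1 := hpu 3
    have hcon : (p 0 * n11 + p 1 * n10) * (n21 + n20)
        = (p 2 * n21 + p 3 * n20) * (n11 + n10) := by
      have := sub_eq_zero.mp hdisp
      rw [div_eq_div_iff hab.ne' hcd.ne'] at this
      linarith [this]
    -- key: δ ≤ X1 + X2
    set X1 : ℝ := (1 - p 0) * n11 / (n11 + n10) with hX1
    set X2 : ℝ := p 3 * n20 / (n21 + n20) with hX2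
    have hX1n : 0 ≤ X1 :=
      div_nonneg (mul_nonneg (by linarith) h11.le) hab.le
    have hX2n : 0 ≤ X2 :=
      div_nonneg (mul_nonneg h3l h20.le) hcd.le
    have hfrac : (p 0 * n11) / (n11 + n10) ≤ (n21 + p 3 * n20) / (n21 + n20) := by
      rw [div_le_div_iff₀ hab hcd]
      linarith [hcon, mul_nonneg (mul_nonneg h1l h10.le) hcd.le,
        mul_nonneg (mul_nonneg (sub_nonneg.mpr h2u) h21.le) hab.le]
    have hkey : δ ≤ X1 + X2 := by
      have e1 : X1 = n11 / (n11 + n10) - p 0 * n11 / (n11 + n10) := by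
        rw [hX1]; ring
      have e2 : (n21 + p 3 * n20) / (n21 + n20) = n21 / (n21 + n20) + X2 := by
        rw [hX2]; ring
      rw [e2] at hfrac
      rw [hδdef, e1]
      linarith
    -- utility bound via A*X1, B*X2
    have eA : A * X1 = (1 - p 0) * n11 / (n11 + n21) := by
      rw [hAdef, hX1]; field_simp
    have eB : B * X2 = lam * ((p 3 * n20) / (n10 + n20)) := by
      rw [hBdef, hX2]; field_simp
    have hU : util n11 n10 n21 n20 lam p ≤ 1 - A * X1 - B * X2 := by
      unfold util
      rw [eA, eB]
      have hle1 : (p 0 * n11 + p 2 * n21) / (n11 + n21) + (1 - p 0) * n11 / (n11 + n21) ≤ 1 := by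
        rw [← add_div, div_le_one hac]
        linarith [mul_le_of_le_one_left h21.le h2u]
      have hle2 : lam * ((p 3 * n20) / (n10 + n20)) ≤ lam * ((p 1 * n10 + p 3 * n20) / (n10 + n20)) := by
        gcongr
        linarith [mul_nonneg h1l h10.le]
      linarith
    have hmix : min A B * δ ≤ A * X1 + B * X2 := by
      have : min A B * δ ≤ min A B * (X1 + X2) :=
        mul_le_mul_of_nonneg_left hkey hm0.le
      linarith [mul_le_mul_of_nonneg_right hmA hX1n, mul_le_mul_of_nonneg_right hmB hX2n,
        mul_add (min A B) X1 X2 ▸ this]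
    linarith
  · rcases le_total A B with hab' | hab'
    · refine ⟨![n21 / (n21 + n20) * (n11 + n10) / n11, 0, 1, 0], ⟨?_, ?_⟩, ?_, ?_⟩
      · intro i; fin_cases i <;>
          simp <;> positivity
      · intro i; fin_cases i <;> simp
        rw [div_le_one h11, div_mul_eq_mul_div, div_le_iff₀ hcd]
        rw [div_lt_div_iff₀ hcd hab] at hBR
        linarith
      · simp [disp]
        field_simp
        ring
      · rw [min_eq_left hab']
        simp [util, hAdef, hδdef]
        field_simp
        ring
    · refine ⟨![1, 0, 1, (n11 / (n11 + n10) - n21 / (n21 + n20)) * (n21 + n20) / n20],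
        ⟨?_, ?_⟩, ?_, ?_⟩
      · intro i; fin_cases i <;> simp
        positivity
      · intro i; fin_cases i <;> simp
        rw [div_le_one h20]
        have h1 : n11 / (n11 + n10) ≤ 1 := by
          rw [div_le_one hab]; linarith
        have h2 : n21 / (n21 + n20) + n20 / (n21 + n20) = 1 := by
          field_simp
        have h3 : n11 / (n11 + n10) - n21 / (n21 + n20) ≤ n20 / (n21 + n20) := by linarith
        have h4 := mul_le_mul_of_nonneg_right h3 hcd.le
        rw [div_mul_cancel₀ _ hcd.ne'] at h4
        linarith
      · simp [disp]
        field_simp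
        ring
      · rw [min_eq_right hab']
        simp [util, hBdef, hδdef]
        field_simp
end

section
/- If a classifier h^0 on a fixed finite population has utility U(h^0) strictly greater than the threshold U* = 1 - min(n_1/n_+, λ·n_2/n_-)·(BR_1 - BR_2), then every randomized classifier with utility at least U(h^0) has strictly positive disparity; in particular no zero-disparity alternative exists at that utility level. -/
set_option maxHeartbeats 1000000


lemma util_le_of_disp_zero
    (n11 n10 n21 n20 lam : ℝ)
    (h11 : 0 < n11) (h10 : 0 < n10) (h21 : 0 < n21) (h20 : 0 < n20) (hlam : 0 < lam)
    (hBR : n21 / (n21 + n20) < n11 / (n11 + n10))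
    (p : Fin 4 → ℝ)
    (hl0 : 0 ≤ p 0) (hu0 : p 0 ≤ 1) (hl1 : 0 ≤ p 1) (hu1 : p 1 ≤ 1)
    (hl2 : 0 ≤ p 2) (hu2 : p 2 ≤ 1) (hl3 : 0 ≤ p 3) (hu3 : p 3 ≤ 1)
    (hd : disp n11 n10 n21 n20 p = 0) :
    util n11 n10 n21 n20 lam p ≤
      1 - min ((n11 + n10) / (n11 + n21)) (lam * (n21 + n20) / (n10 + n20)) *
            (n11 / (n11 + n10) - n21 / (n21 + n20)) := by
  have hn1 : 0 < n11 + n10 := by linarith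
  have hn2 : 0 < n21 + n20 := by linarith
  have hnp : 0 < n11 + n21 := by linarith
  have hnm : 0 < n10 + n20 := by linarith
  set s : ℝ := (p 2 * n21 + p 3 * n20) / (n21 + n20) with hs_def
  set br1 : ℝ := n11 / (n11 + n10) with hbr1
  set br2 : ℝ := n21 / (n21 + n20) with hbr2
  set A : ℝ := (n11 + n10) / (n11 + n21) with hA
  set B : ℝ := lam * (n21 + n20) / (n10 + n20) with hB
  have hA0 : 0 < A := div_pos hn1 hnp
  have hB0 : 0 < B := div_pos (mul_pos hlam hn2) hnm
  have hD : 0 < br1 - br2 := sub_pos.mpr hBR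
  have hs2 : p 2 * n21 + p 3 * n20 = s * (n21 + n20) := by
    rw [hs_def]; field_simp
  have hs1 : p 0 * n11 + p 1 * n10 = s * (n11 + n10) := by
    unfold disp at hd
    have h : (p 0 * n11 + p 1 * n10) / (n11 + n10) = s := by
      rw [hs_def]; linarith [hd]
    field_simp at h
    linarith [h]
  -- T1 bounds
  have hT1a : A * (br1 - s) ≤ n11 * (1 - p 0) / (n11 + n21) := by
    have heq : A * (br1 - s) = (n11 - s * (n11 + n10)) / (n11 + n21) := by
      rw [hA, hbr1]; field_simp
    rw [heq, div_le_div_iff₀ hnp hnp]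
    nlinarith [mul_nonneg hl1 h10.le]
  have hT1b : 0 ≤ n11 * (1 - p 0) / (n11 + n21) := by
    apply div_nonneg _ hnp.le
    nlinarith
  have hT2a : B * (s - br2) ≤ lam * (n20 * p 3) / (n10 + n20) := by
    have heq : B * (s - br2) = lam * (s * (n21 + n20) - n21) / (n10 + n20) := by
      rw [hB, hbr2]; field_simp
    rw [heq, div_le_div_iff₀ hnm hnm, hs2.symm]
    nlinarith [mul_nonneg (mul_nonneg (mul_nonneg hlam.le (sub_nonneg.mpr hu2)) h21.le) hnm.le]
  have hT2b : 0 ≤ lam * (n20 * p 3) / (n10 + n20) := by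
    apply div_nonneg _ hnm.le
    positivity
  -- utility upper bound via T1 + T2
  have hC1 : util n11 n10 n21 n20 lam p ≤
      1 - (n11 * (1 - p 0) / (n11 + n21) + lam * (n20 * p 3) / (n10 + n20)) := by
    unfold util
    have e1 : (p 0 * n11 + p 2 * n21) / (n11 + n21) ≤ 1 - n11 * (1 - p 0) / (n11 + n21) := by
      have key : (p 0 * n11 + p 2 * n21) / (n11 + n21) + n11 * (1 - p 0) / (n11 + n21) ≤ 1 := by
        rw [← add_div, div_le_one hnp]
        nlinarith [mul_nonneg (sub_nonneg.mpr hu2) h21.le]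
      linarith
    have e2 : lam * (n20 * p 3) / (n10 + n20) ≤ lam * ((p 1 * n10 + p 3 * n20) / (n10 + n20)) := by
      rw [mul_div_assoc]
      gcongr
      nlinarith [mul_nonneg hl1 h10.le]
    linarith
  have hmA : min A B ≤ A := min_le_left _ _
  have hmB : min A B ≤ B := min_le_right _ _
  have hkey : min A B * (br1 - br2) ≤
      n11 * (1 - p 0) / (n11 + n21) + lam * (n20 * p 3) / (n10 + n20) := by
    rcases le_or_gt br1 s with h | h
    · have step : min A B * (br1 - br2) ≤ B * (s - br2) := by
        nlinarith [mul_nonneg hB0.le (sub_nonneg.mpr h),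
          mul_nonneg (sub_nonneg.mpr hmB) hD.le]
      linarith
    · rcases le_or_gt s br2 with h2 | h2
      · have step : min A B * (br1 - br2) ≤ A * (br1 - s) := by
          nlinarith [mul_nonneg hA0.le (sub_nonneg.mpr h2),
            mul_nonneg (sub_nonneg.mpr hmA) hD.le]
        linarith
      · have step : min A B * (br1 - br2) ≤ A * (br1 - s) + B * (s - br2) := by
          nlinarith [mul_nonneg (sub_nonneg.mpr hmA) (sub_nonneg.mpr h.le),
            mul_nonneg (sub_nonneg.mpr hmB) (sub_nonneg.mpr h2.le)]
        linarith
  linarith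

/-- if a classifier `p₀` has utility strictly greater than the threshold
`U* = 1 - min(n₁/n₊, λ·n₂/n₋)·(BR₁ - BR₂)`, then every randomized classifier with
utility at least `U(p₀)` has strictly positive absolute disparity. -/
theorem above_threshold_forces_positive_disparity
    (n11 n10 n21 n20 lam : ℝ)
    (h11 : 0 < n11) (h10 : 0 < n10) (h21 : 0 < n21) (h20 : 0 < n20) (hlam : 0 < lam)
    (hBR : n21 / (n21 + n20) < n11 / (n11 + n10))
    (p0 : Fin 4 → ℝ) (hp0 : p0 ∈ Set.Icc (0 : Fin 4 → ℝ) 1)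
    (hU : 1 - min ((n11 + n10) / (n11 + n21)) (lam * (n21 + n20) / (n10 + n20)) *
            (n11 / (n11 + n10) - n21 / (n21 + n20))
          < util n11 n10 n21 n20 lam p0) :
    ∀ p ∈ Set.Icc (0 : Fin 4 → ℝ) 1,
      util n11 n10 n21 n20 lam p0 ≤ util n11 n10 n21 n20 lam p →
      0 < |disp n11 n10 n21 n20 p| := by
  intro p hp hup
  by_contra hcon
  push_neg at hcon
  have hd : disp n11 n10 n21 n20 p = 0 :=
    abs_eq_zero.mp (le_antisymm hcon (abs_nonneg _))
  have hle := util_le_of_disp_zero n11 n10 n21 n20 lam h11 h10 h21 h20 hlam hBR p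
    (hp.1 0) (hp.2 0) (hp.1 1) (hp.2 1) (hp.1 2) (hp.2 2) (hp.1 3) (hp.2 3) hd
  linarith
end
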